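/- Assume K symmetric with zero diagonal, K_{ij} > 0 for all i ≠ j, and let κ = min_{i≠j} K_{ij} > 0. Then for all U ∈ D and ζ ∈ ℝ^n, ζᵀ D²ĥ(U) Â(U) ζ ≥ κ Σ_{i=1}^n ζ_i²/U_i, where Â(U) = M̂(U) D²ĥ(U) is given by Â_{ij}(U) = δ_{ij}[Σ_{l=1}^n K_{il}U_l + K_{i0}(1 − Σ_l U_l)] − (K_{ij} − K_{i0}) U_i for i,j ∈ {1,…,n}. -/

import Mathlib

open Finset

lemma aux_sum (n : ℕ) (K' : Fin n → Fin n → ℝ) (b : Fin n → ℝ)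
    (hsym' : ∀ i j, K' i j = K' j i)
    (U ζ : Fin n → ℝ) (hU : ∀ i, U i ≠ 0) (v : ℝ) (hv0 : v ≠ 0)
    (hv1 : v + ∑ i, U i = 1) :
    ∑ i, (ζ i / U i + (∑ k, ζ k) / v) *
      (∑ j, ((if i = j then (∑ l, K' i l * U l) + b i * v else 0) - (K' i j - b i) * U i) * ζ j)
    = (1/2) * (∑ i, ∑ j, K' i j * U i * U j * (ζ i / U i - ζ j / U j)^2)
      + ∑ i, b i * U i * v * (ζ i / U i + (∑ k, ζ k) / v)^2 := by
  set s := ∑ k, ζ k with hs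
  set η : Fin n → ℝ := fun i => ζ i / U i + s / v with hη
  have hζ : ∀ i, ζ i = U i * η i - U i * (s / v) := by
    intro i
    have := hU i
    simp only [hη]
    have h2 : U i * (ζ i / U i) = ζ i := by field_simp
    linear_combination -h2
  have hvs : v * (s / v) = s := by field_simp
  have hinner : ∀ i, (∑ j, ((if i = j then (∑ l, K' i l * U l) + b i * v else 0) - (K' i j - b i) * U i) * ζ j)
      = (∑ j, (K' i j * U j * ζ i - K' i j * U i * ζ j + b i * U i * ζ j)) + b i * v * ζ i := by
    intro i
    have h1 : ∑ j, (if i = j then (∑ l, K' i l * U l) + b i * v else 0) * ζ j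
        = (∑ j, K' i j * U j * ζ i) + b i * v * ζ i := by
      simp only [ite_mul, zero_mul, Finset.sum_ite_eq, Finset.mem_univ, if_true, add_mul,
        Finset.sum_mul]
    calc ∑ j, ((if i = j then (∑ l, K' i l * U l) + b i * v else 0) - (K' i j - b i) * U i) * ζ j
        = (∑ j, (if i = j then (∑ l, K' i l * U l) + b i * v else 0) * ζ j)
          - ∑ j, (K' i j * U i * ζ j - b i * U i * ζ j) := by
          rw [← Finset.sum_sub_distrib]
          apply Finset.sum_congr rfl
          intros; ring
      _ = _ := by
          have h3 : ∑ j, (K' i j * U j * ζ i - K' i j * U i * ζ j + b i * U i * ζ j)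
              = (∑ j, K' i j * U j * ζ i) - ∑ j, (K' i j * U i * ζ j - b i * U i * ζ j) := by
            rw [← Finset.sum_sub_distrib]
            exact Finset.sum_congr rfl (by intros; ring)
          rw [h1, h3]; ring
  -- now LHS = ΣΣ termwise + Σ b v ζ η
  have step1 : ∑ i, η i *
      (∑ j, ((if i = j then (∑ l, K' i l * U l) + b i * v else 0) - (K' i j - b i) * U i) * ζ j)
      = (∑ i, ∑ j, (K' i j * U i * U j * (η i * (η i - η j)) + b i * U i * η i * ζ j))
        + ∑ i, b i * v * ζ i * η i := by
    rw [← Finset.sum_add_distrib]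
    apply Finset.sum_congr rfl
    intro i _
    rw [hinner i, mul_add, Finset.mul_sum]
    congr 1
    · apply Finset.sum_congr rfl
      intro j _
      rw [hζ i, hζ j]
      ring
    · ring
  have hηa : ∀ i, ζ i / U i + s / v = η i := fun i => rfl
  have half : ∀ (f : Fin n → Fin n → ℝ),
      (∑ i, ∑ j, (1/2) * f i j) = (1/2) * ∑ i, ∑ j, f i j := by
    intro f
    rw [Finset.mul_sum]
    exact Finset.sum_congr rfl fun i _ => (Finset.mul_sum _ _ _).symm
  have anti : (∑ i, ∑ j, K' i j * U i * U j * (η i^2 - η j^2)) = 0 := by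
    have h := Finset.sum_comm (s := (univ : Finset (Fin n))) (t := (univ : Finset (Fin n)))
      (f := fun i j => K' i j * U i * U j * (η i^2 - η j^2))
    have h2 : (∑ i, ∑ j, K' i j * U i * U j * (η i^2 - η j^2))
        + (∑ i, ∑ j, K' i j * U i * U j * (η i^2 - η j^2)) = 0 := by
      nth_rewrite 2 [h]
      rw [← Finset.sum_add_distrib]
      apply Finset.sum_eq_zero
      intro i _
      rw [← Finset.sum_add_distrib]
      apply Finset.sum_eq_zero
      intro j _
      rw [hsym' i j]
      ring
    linarith
  have sq : (∑ i, ∑ j, K' i j * U i * U j * (η i * (η i - η j)))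
      = (1/2) * ∑ i, ∑ j, K' i j * U i * U j * (ζ i / U i - ζ j / U j)^2 := by
    have e1 : (∑ i, ∑ j, K' i j * U i * U j * (η i * (η i - η j)))
        = (∑ i, ∑ j, (1/2) * (K' i j * U i * U j * (ζ i / U i - ζ j / U j)^2))
          + ∑ i, ∑ j, (1/2) * (K' i j * U i * U j * (η i^2 - η j^2)) := by
      rw [← Finset.sum_add_distrib]
      apply Finset.sum_congr rfl
      intro i _
      rw [← Finset.sum_add_distrib]
      apply Finset.sum_congr rfl
      intro j _
      have hd : ζ i / U i - ζ j / U j = η i - η j := by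
        simp only [hη]; ring
      rw [hd]
      ring
    rw [e1, half, half, anti]
    ring
  rw [show (∑ i, (ζ i / U i + (∑ k, ζ k) / v) *
      (∑ j, ((if i = j then (∑ l, K' i l * U l) + b i * v else 0) - (K' i j - b i) * U i) * ζ j))
    = ∑ i, η i *
      (∑ j, ((if i = j then (∑ l, K' i l * U l) + b i * v else 0) - (K' i j - b i) * U i) * ζ j) from
    Finset.sum_congr rfl fun i _ => by rw [hηa i]]
  rw [step1]
  have split2 : (∑ i, ∑ j, (K' i j * U i * U j * (η i * (η i - η j)) + b i * U i * η i * ζ j))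
      = (∑ i, ∑ j, K' i j * U i * U j * (η i * (η i - η j))) + ∑ i, b i * U i * η i * s := by
    rw [← Finset.sum_add_distrib]
    apply Finset.sum_congr rfl
    intro i _
    rw [Finset.sum_add_distrib, ← Finset.mul_sum, ← hs]
  have last : (∑ i, b i * U i * η i * s) + (∑ i, b i * v * ζ i * η i)
      = ∑ i, b i * U i * v * (ζ i / U i + s / v)^2 := by
    rw [← Finset.sum_add_distrib]
    apply Finset.sum_congr rfl
    intro i _
    rw [hηa i, hζ i]
    have hUi := hU i
    field_simp
    ring
  rw [split2, sq]
  linarith [last]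


/-- under full interaction (K_{ij} > 0 for i ≠ j),
ζᵀ D²ĥ(U) Â(U) ζ ≥ κ Σ ζ_i²/U_i on D, with κ = min_{i≠j} K_{ij} and
Â_{ij}(U) = δ_{ij}[Σ_l K_{il}U_l + K_{i0}(1−ΣU)] − (K_{ij}−K_{i0})U_i. -/
theorem stmt_14 (n : ℕ) (hn : 1 ≤ n) (K : Matrix (Fin (n+1)) (Fin (n+1)) ℝ)
    (hdiag : ∀ i, K i i = 0) (hsym : ∀ i j, K i j = K j i)
    (hposK : ∀ i j, i ≠ j → 0 < K i j)
    (U : Fin n → ℝ) (hpos : ∀ i, 0 < U i) (hsum : ∑ i, U i < 1)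
    (ζ : Fin n → ℝ) :
    let Ahat : Matrix (Fin n) (Fin n) ℝ :=
      Matrix.of fun i j =>
        (if i = j then (∑ l, K i.succ l.succ * U l) + K i.succ 0 * (1 - ∑ l, U l) else 0)
          - (K i.succ j.succ - K i.succ 0) * U i
    let Hhat : Matrix (Fin n) (Fin n) ℝ :=
      Matrix.of fun i j => (if i = j then 1 / U i else 0) + 1 / (1 - ∑ k, U k)
    dotProduct ζ ((Hhat * Ahat).mulVec ζ)
      ≥ sInf {x : ℝ | ∃ i j, i ≠ j ∧ x = K i j} * ∑ i, (ζ i)^2 / U i := by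
  intro Ahat Hhat
  set v : ℝ := 1 - ∑ k, U k with hv
  have hv0 : (0:ℝ) < v := by rw [hv]; linarith
  have hv1 : v + ∑ i, U i = 1 := by rw [hv]; ring
  have hU0 : ∀ i, U i ≠ 0 := fun i => ne_of_gt (hpos i)
  set s := ∑ k, ζ k with hs
  set κ := sInf {x : ℝ | ∃ i j, i ≠ j ∧ x = K i j} with hκ
  have hbdd : BddBelow {x : ℝ | ∃ i j, i ≠ j ∧ x = K i j} :=
    ⟨0, by rintro x ⟨i, j, hij, rfl⟩; exact le_of_lt (hposK i j hij)⟩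
  have hκle : ∀ i j : Fin (n+1), i ≠ j → κ ≤ K i j :=
    fun i j hij => csInf_le hbdd ⟨i, j, hij, rfl⟩
  have hκ0 : 0 ≤ κ := by
    obtain ⟨m, rfl⟩ : ∃ m, n = m + 1 := ⟨n - 1, by omega⟩
    refine le_csInf ⟨K 0 1, 0, 1, Fin.zero_ne_one, rfl⟩ ?_
    rintro x ⟨i, j, hij, rfl⟩
    exact le_of_lt (hposK i j hij)
  -- reduce dot product
  have hdot : dotProduct ζ ((Hhat * Ahat).mulVec ζ)
      = ∑ i, (ζ i / U i + s / v) *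
          (∑ j, ((if i = j then (∑ l, K i.succ l.succ * U l) + K i.succ 0 * v else 0)
            - (K i.succ j.succ - K i.succ 0) * U i) * ζ j) := by
    rw [← Matrix.mulVec_mulVec, Matrix.dotProduct_mulVec]
    apply Finset.sum_congr rfl
    intro i _
    congr 1
    · show ∑ j, ζ j * Hhat j i = ζ i / U i + s / v
      have : ∀ j, ζ j * Hhat j i = ζ j * (if j = i then 1 / U j else 0) + ζ j * (1/v) := by
        intro j
        show ζ j * ((if j = i then 1 / U j else 0) + 1/v) = _
        ring
      rw [Finset.sum_congr rfl fun j _ => this j, Finset.sum_add_distrib]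
      congr 1
      · simp [mul_ite, Finset.sum_ite_eq', div_eq_mul_inv]
      · rw [← Finset.sum_mul, ← hs]
        field_simp
  rw [hdot]
  have key := aux_sum n (fun i j => K i.succ j.succ) (fun i => K i.succ 0)
    (fun i j => hsym i.succ j.succ) U ζ hU0 v (ne_of_gt hv0) hv1
  rw [key]
  -- the κ identity
  have haux2 : ∑ i, (ζ i / U i + s / v) * (κ * ζ i)
      = (1/2) * (∑ i, ∑ j, κ * U i * U j * (ζ i / U i - ζ j / U j)^2)
        + ∑ i, κ * U i * v * (ζ i / U i + s / v)^2 := by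
    have h := aux_sum n (fun _ _ => κ) (fun _ => κ) (fun _ _ => rfl) U ζ hU0 v
      (ne_of_gt hv0) hv1
    rw [← h]
    apply Finset.sum_congr rfl
    intro i _
    congr 1
    have hcol : ∑ j, ((if i = j then (∑ l, κ * U l) + κ * v else 0) - (κ - κ) * U i) * ζ j
        = ((∑ l, κ * U l) + κ * v) * ζ i := by
      simp [ite_mul, zero_mul, Finset.sum_ite_eq]
    have h2 : κ * (∑ l, U l) + κ * v = κ := by
      rw [← mul_one κ, ← hv1]; ring
    rw [hcol, ← Finset.mul_sum, h2]
  -- termwise comparisons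
  have hsq : (∑ i, ∑ j, κ * U i * U j * (ζ i / U i - ζ j / U j)^2)
      ≤ ∑ i, ∑ j, K i.succ j.succ * U i * U j * (ζ i / U i - ζ j / U j)^2 := by
    apply Finset.sum_le_sum
    intro i _
    apply Finset.sum_le_sum
    intro j _
    by_cases hij : i = j
    · subst hij; simp
    · have hk : κ ≤ K i.succ j.succ := hκle _ _ (fun h => hij (Fin.succ_injective n h))
      have h1 : (0:ℝ) ≤ U i * U j * (ζ i / U i - ζ j / U j)^2 :=
        mul_nonneg (mul_nonneg (hpos i).le (hpos j).le) (sq_nonneg _)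
      calc κ * U i * U j * (ζ i / U i - ζ j / U j)^2
          = κ * (U i * U j * (ζ i / U i - ζ j / U j)^2) := by ring
        _ ≤ K i.succ j.succ * (U i * U j * (ζ i / U i - ζ j / U j)^2) :=
            mul_le_mul_of_nonneg_right hk h1
        _ = _ := by ring
  have hb : (∑ i, κ * U i * v * (ζ i / U i + s / v)^2)
      ≤ ∑ i, K i.succ 0 * U i * v * (ζ i / U i + s / v)^2 := by
    apply Finset.sum_le_sum
    intro i _
    have hk : κ ≤ K i.succ 0 := hκle _ _ (Fin.succ_ne_zero i)
    have h1 : (0:ℝ) ≤ U i * v * (ζ i / U i + s / v)^2 :=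
      mul_nonneg (mul_nonneg (hpos i).le hv0.le) (sq_nonneg _)
    calc κ * U i * v * (ζ i / U i + s / v)^2
        = κ * (U i * v * (ζ i / U i + s / v)^2) := by ring
      _ ≤ K i.succ 0 * (U i * v * (ζ i / U i + s / v)^2) :=
          mul_le_mul_of_nonneg_right hk h1
      _ = _ := by ring
  -- value of the κ quadratic form
  have hfin : ∑ i, (ζ i / U i + s / v) * (κ * ζ i)
      = κ * (∑ i, (ζ i)^2 / U i) + κ * (s * (s / v)) := by
    have e : ∀ i, (ζ i / U i + s / v) * (κ * ζ i)
        = κ * ((ζ i)^2 / U i) + (κ * (s / v)) * ζ i := by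
      intro i; ring
    rw [Finset.sum_congr rfl fun i _ => e i, Finset.sum_add_distrib, ← Finset.mul_sum,
      ← Finset.mul_sum, ← hs]
    ring
  have hnn : 0 ≤ κ * (s * (s / v)) := by
    apply mul_nonneg hκ0
    have : s * (s / v) = s^2 / v := by ring
    rw [this]; positivity
  have half_le : (1/2 : ℝ) * (∑ i, ∑ j, κ * U i * U j * (ζ i / U i - ζ j / U j)^2)
      ≤ (1/2 : ℝ) * ∑ i, ∑ j, K i.succ j.succ * U i * U j * (ζ i / U i - ζ j / U j)^2 := by
    linarith [hsq]
  linarith [half_le, hb, hnn, haux2, hfin]
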